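/- Let F be a finite field, let k < n be positive integers, and let G be a basic n×k matrix over F[s] of full column rank k, generating the code C = { G·u : u ∈ F[s]^k } of complexity δ (the maximum of the degrees of the determinants of the k×k submatrices of G). If d_j^c(C) = (n−k)(j+1) + 1 for some j ≥ 0, then j ≤ L, where L = ⌊δ/k⌋ + ⌊δ/(n−k)⌋. -/

import Mathlib

open Polynomial

/-- The Hamming weight of a vector over a field. -/
noncomputable def hammingWt {F : Type*} [Field F] {n : ℕ} (x : Fin n → F) : ℕ :=
  Nat.card {i : Fin n // x i ≠ 0}

/-- The `j`-th column distance of a set of polynomial vectors (a convolutional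
code): the minimal sum of the Hamming weights of the first `j+1` coefficient
vectors of a codeword whose zeroth coefficient vector is nonzero. -/
noncomputable def colDist {F : Type*} [Field F] {n : ℕ}
    (C : Set (Fin n → Polynomial F)) (j : ℕ) : ℕ :=
  sInf {w | ∃ v ∈ C, (fun i => (v i).coeff 0) ≠ (0 : Fin n → F) ∧
    (∑ t ∈ Finset.range (j + 1), hammingWt (fun i => (v i).coeff t)) = w}

/-- `G` is basic: the only common divisors of the determinants of its `k × k`
submatrices are the units, i.e. the nonzero constants. -/
def IsBasic {F : Type*} [Field F] {n k : ℕ}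
    (G : Matrix (Fin n) (Fin k) (Polynomial F)) : Prop :=
  ∀ d : Polynomial F,
    (∀ r : Fin k → Fin n, StrictMono r → d ∣ (G.submatrix r id).det) → IsUnit d



section Aux

open Matrix
open scoped Classical

variable {F : Type*} [Field F] {n k : ℕ}

private lemma coeff_prod_sum' {ι : Type*} (s : Finset ι) (p : ι → Polynomial F) (d : ι → ℕ)
    (h : ∀ i ∈ s, (p i).natDegree ≤ d i) :
    (∏ i ∈ s, p i).coeff (∑ i ∈ s, d i) = ∏ i ∈ s, (p i).coeff (d i) := by
  induction s using Finset.cons_induction with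
  | empty => simp
  | cons a s ha ih =>
    rw [Finset.prod_cons, Finset.sum_cons,
      coeff_mul_add_eq_of_natDegree_le (h a (Finset.mem_cons_self a s))
        ((Polynomial.natDegree_prod_le _ _).trans
          (Finset.sum_le_sum (fun i hi => h i (Finset.mem_cons_of_mem hi)))),
      ih (fun i hi => h i (Finset.mem_cons_of_mem hi)), Finset.prod_cons]

private lemma coeff_det_sum (M : Matrix (Fin k) (Fin k) (Polynomial F)) (d : Fin k → ℕ)
    (h : ∀ i c, (M i c).natDegree ≤ d c) :
    (M.det).coeff (∑ c, d c) = Matrix.det (Matrix.of fun i c => (M i c).coeff (d c)) := by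
  rw [Matrix.det_apply', Matrix.det_apply', Polynomial.finset_sum_coeff]
  refine Finset.sum_congr rfl (fun σ _ => ?_)
  rw [show (((Equiv.Perm.sign σ : ℤ) : Polynomial F)) = Polynomial.C ((Equiv.Perm.sign σ : ℤ) : F) by
    rw [← map_intCast (Polynomial.C : F →+* Polynomial F)], Polynomial.coeff_C_mul,
    coeff_prod_sum' _ _ _ (fun i _ => h (σ i) i)]
  rfl

private lemma hammingWt_eq (x : Fin n → F) :
    hammingWt x = (Finset.univ.filter (fun i => x i ≠ 0)).card := by
  rw [hammingWt, Nat.card_eq_fintype_card, Fintype.card_subtype]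

private lemma hammingWt_zero : hammingWt (0 : Fin n → F) = 0 := by
  simp [hammingWt]

private lemma exists_strictMono_det_ne_zero (L : Matrix (Fin n) (Fin k) F)
    (hL : Function.Injective L.mulVec) :
    ∃ r : Fin k → Fin n, StrictMono r ∧ (L.submatrix r id).det ≠ 0 := by
  have hrank : L.rank = k := by
    have : Function.Injective L.mulVecLin := hL
    rw [Matrix.rank, LinearMap.finrank_range_of_inj this, Module.finrank_fin_fun]
  have hrT : Lᵀ.rank = k := by rw [Matrix.rank_transpose]; exact hrank
  have hrange : LinearMap.range (Lᵀ.mulVecLin) = ⊤ := by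
    apply Submodule.eq_top_of_finrank_eq
    rw [Module.finrank_fin_fun]
    exact hrT
  have hspan : Submodule.span F (Set.range (fun i => L i)) = ⊤ := by
    rw [← hrange, Matrix.range_mulVecLin]; rfl
  obtain ⟨b, hb1, hb2, hb3⟩ := exists_linearIndependent F (Set.range (fun i => L i))
  rw [hspan] at hb2
  haveI : Fintype b := ((Set.finite_range (fun i => L i)).subset hb1).fintype
  have hbasis : Fintype.card b = k := by
    have h1 := Module.finrank_eq_card_basis (Module.Basis.mk hb3 (by rw [Subtype.range_coe, hb2]))
    rw [Module.finrank_fin_fun] at h1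
    convert h1.symm using 2 <;> exact Subsingleton.elim _ _
  have hpv : ∀ v : b, ∃ i, L i = (v : Fin k → F) := fun v => hb1 v.2
  set pick : b → Fin n := fun v => (hpv v).choose with hpickdef
  have hpick : ∀ v : b, L (pick v) = (v : Fin k → F) := fun v => (hpv v).choose_spec
  have hpinj : Function.Injective pick := by
    intro v w h
    apply Subtype.ext
    rw [← hpick v, ← hpick w, h]
  set T : Finset (Fin n) := Finset.image pick Finset.univ with hT
  have hTcard : T.card = k := by
    rw [hT, Finset.card_image_of_injective _ hpinj, Finset.card_univ, hbasis]
  set r : Fin k → Fin n := fun c => ((T.orderIsoOfFin hTcard c : Fin n)) with hr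
  have hrmono : StrictMono r := fun c c' h =>
    Subtype.coe_lt_coe.mpr ((T.orderIsoOfFin hTcard).strictMono h)
  refine ⟨r, hrmono, ?_⟩
  have hmem : ∀ c, L (r c) ∈ b := by
    intro c
    have : r c ∈ T := (T.orderIsoOfFin hTcard c).2
    rw [hT] at this
    obtain ⟨v, _, hv⟩ := Finset.mem_image.mp this
    rw [← hv, hpick v]; exact v.2
  set g : Fin k → b := fun c => ⟨L (r c), hmem c⟩ with hg
  have hginj : Function.Injective g := by
    intro c c' h
    have h2 : L (r c) = L (r c') := congrArg Subtype.val h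
    have : r c = r c' := by
      have h3 : r c ∈ T := (T.orderIsoOfFin hTcard c).2
      have h4 : r c' ∈ T := (T.orderIsoOfFin hTcard c').2
      rw [hT] at h3 h4
      obtain ⟨v, _, hv⟩ := Finset.mem_image.mp h3
      obtain ⟨w, _, hw⟩ := Finset.mem_image.mp h4
      rw [← hv, ← hw]
      congr 1
      apply Subtype.ext
      rw [← hpick v, ← hpick w, hv, hw, h2]
    exact hrmono.injective this
  have hli : LinearIndependent F (fun c => L (r c)) := by
    have := hb3.comp g hginj
    exact this
  have hrows : LinearIndependent F (fun c => (L.submatrix r id) c) := hli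
  have hunit := Matrix.linearIndependent_rows_iff_isUnit.mp hrows
  intro hdet
  have hd := (Matrix.isUnit_iff_isUnit_det _).mp hunit
  change IsUnit (L.submatrix r id).det at hd
  rw [hdet] at hd
  exact hd.ne_zero rfl

private lemma mulVec_inj_of_isUnit_det {R : Type*} [CommRing R] {k : ℕ}
    {P : Matrix (Fin k) (Fin k) R} (h : IsUnit P.det) : Function.Injective P.mulVec := by
  haveI := P.invertibleOfIsUnitDet h
  intro x y hxy
  have h2 := congrArg (fun v => (⅟P) *ᵥ v) hxy
  simpa [Matrix.mulVec_mulVec, invOf_mul_self, Matrix.one_mulVec] using h2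

private lemma natDegree_le_pred' {p : Polynomial F} {m : ℕ} (h1 : p.natDegree ≤ m)
    (h2 : p.coeff m = 0) (hm : 1 ≤ m) : p.natDegree ≤ m - 1 := by
  rcases eq_or_ne p 0 with rfl | hp
  · simp
  · have : p.natDegree ≠ m := fun h => by
      rw [← h] at h2; exact hp (Polynomial.leadingCoeff_eq_zero.mp h2)
    omega

private lemma cr_aux (G : Matrix (Fin n) (Fin k) (Polynomial F))
    (hfull : Function.Injective G.mulVec) (δ : ℕ)
    (hub : ∀ r : Fin k → Fin n, StrictMono r → (G.submatrix r id).det ≠ 0 →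
      ((G.submatrix r id).det).natDegree ≤ δ) :
    ∀ N : ℕ, ∀ P : Matrix (Fin k) (Fin k) (Polynomial F), IsUnit P.det →
      (∑ c, Finset.univ.sup (fun i => ((G * P) i c).natDegree)) ≤ N →
      ∃ P' : Matrix (Fin k) (Fin k) (Polynomial F), IsUnit P'.det ∧
        (∑ c, Finset.univ.sup (fun i => ((G * P') i c).natDegree)) ≤ δ := by
  intro N
  induction N using Nat.strong_induction_on with
  | _ N ih =>
  intro P hP hN
  set M := G * P with hM
  set d : Fin k → ℕ := fun c => Finset.univ.sup (fun i => (M i c).natDegree) with hd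
  have hdeg : ∀ i c, (M i c).natDegree ≤ d c := by
    intro i c
    rw [hd]
    exact Finset.le_sup (f := fun i => (M i c).natDegree) (Finset.mem_univ i)
  set L : Matrix (Fin n) (Fin k) F := Matrix.of (fun i c => (M i c).coeff (d c)) with hL
  by_cases hLi : Function.Injective L.mulVec
  · obtain ⟨r, hrm, hrd⟩ := exists_strictMono_det_ne_zero L hLi
    refine ⟨P, hP, ?_⟩
    have hsub : M.submatrix r id = (G.submatrix r id) * P := by
      ext i c
      simp [Matrix.mul_apply, hM, Matrix.submatrix_apply]
    have hcoeff : ((M.submatrix r id).det).coeff (∑ c, d c) = (L.submatrix r id).det := by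
      have h0 := coeff_det_sum (M.submatrix r id) d (fun i c => hdeg (r i) c)
      rw [h0]
      congr 1
    have hMd : (M.submatrix r id).det ≠ 0 := fun h => by
      rw [h] at hcoeff; simp at hcoeff; exact hrd hcoeff.symm
    have hGd : (G.submatrix r id).det ≠ 0 := fun h => by
      rw [hsub, Matrix.det_mul, h, zero_mul] at hMd; exact hMd rfl
    have hPd : P.det ≠ 0 := hP.ne_zero
    have h1 : (∑ c, d c) ≤ ((M.submatrix r id).det).natDegree := by
      apply Polynomial.le_natDegree_of_ne_zero
      rw [hcoeff]; exact hrd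
    rw [hsub, Matrix.det_mul, Polynomial.natDegree_mul hGd hPd,
      Polynomial.natDegree_eq_zero_of_isUnit hP, add_zero] at h1
    exact h1.trans (hub r hrm hGd)
  · obtain ⟨x, y, hxy, hne⟩ := Function.not_injective_iff.mp hLi
    set lam : Fin k → F := x - y with hlam
    have hlam0 : lam ≠ 0 := fun h => hne (by rwa [← sub_eq_zero, ← hlam])
    have hlamv : L *ᵥ lam = 0 := by
      rw [hlam, Matrix.mulVec_sub, hxy, sub_self]
    have hsupp : (Finset.univ.filter (fun c => lam c ≠ 0)).Nonempty := by
      obtain ⟨c, hc⟩ := Function.ne_iff.mp hlam0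
      exact ⟨c, Finset.mem_filter.mpr ⟨Finset.mem_univ c, hc⟩⟩
    obtain ⟨c₀, hc₀mem, hc₀max⟩ := Finset.exists_max_image _ d hsupp
    have hlamc₀ : lam c₀ ≠ 0 := (Finset.mem_filter.mp hc₀mem).2
    set E : Matrix (Fin k) (Fin k) (Polynomial F) :=
      Matrix.updateCol 1 c₀ (fun c => Polynomial.C (lam c) * X ^ (d c₀ - d c)) with hE
    have hdetE : E.det = Polynomial.C (lam c₀) := by
      rw [hE, ← Matrix.cramer_apply, Matrix.cramer_one]
      simp
    have hPE : IsUnit (P * E).det := by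
      rw [Matrix.det_mul, hdetE]
      exact hP.mul ((Polynomial.isUnit_C).mpr (isUnit_iff_ne_zero.mpr hlamc₀))
    set M' := G * (P * E) with hM'
    have hM'E : M' = M * E := by rw [hM', hM, Matrix.mul_assoc]
    have hcol : ∀ i c, c ≠ c₀ → M' i c = M i c := by
      intro i c hc
      rw [hM'E, Matrix.mul_apply]
      have heq : ∀ j, E j c = if j = c then 1 else 0 := fun j => by
        rw [hE, Matrix.updateCol_apply, if_neg hc, Matrix.one_apply]
      simp only [heq, mul_ite, mul_one, mul_zero, Finset.sum_ite_eq', Finset.mem_univ, if_pos]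
    have hcol0 : ∀ i, M' i c₀ = ∑ j, M i j * (Polynomial.C (lam j) * X ^ (d c₀ - d j)) := by
      intro i
      rw [hM'E, Matrix.mul_apply]
      refine Finset.sum_congr rfl (fun j _ => ?_)
      rw [hE, Matrix.updateCol_apply, if_pos rfl]
    have hdegcol : ∀ i, (M' i c₀).natDegree ≤ d c₀ := by
      intro i
      rw [hcol0 i]
      apply Polynomial.natDegree_sum_le_of_forall_le
      intro j _
      by_cases hj : lam j = 0
      · simp [hj]
      · have hdj : d j ≤ d c₀ := hc₀max j (Finset.mem_filter.mpr ⟨Finset.mem_univ j, hj⟩)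
        calc (M i j * (Polynomial.C (lam j) * X ^ (d c₀ - d j))).natDegree
            ≤ (M i j).natDegree + (Polynomial.C (lam j) * X ^ (d c₀ - d j)).natDegree :=
              Polynomial.natDegree_mul_le
          _ ≤ d j + ((Polynomial.C (lam j)).natDegree
              + (X ^ (d c₀ - d j) : Polynomial F).natDegree) :=
              add_le_add (hdeg i j) Polynomial.natDegree_mul_le
          _ ≤ d j + (0 + (d c₀ - d j)) := by
              rw [Polynomial.natDegree_C, Polynomial.natDegree_X_pow]
          _ ≤ d c₀ := by omega
    have hcoeffcol : ∀ i, (M' i c₀).coeff (d c₀) = 0 := by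
      intro i
      rw [hcol0 i, Polynomial.finset_sum_coeff]
      have heach : ∀ j, (M i j * (Polynomial.C (lam j) * X ^ (d c₀ - d j))).coeff (d c₀)
          = L i j * lam j := by
        intro j
        by_cases hj : lam j = 0
        · simp [hj]
        · have hdj : d j ≤ d c₀ := hc₀max j (Finset.mem_filter.mpr ⟨Finset.mem_univ j, hj⟩)
          rw [show M i j * (Polynomial.C (lam j) * X ^ (d c₀ - d j))
              = Polynomial.C (lam j) * (M i j * X ^ (d c₀ - d j)) by ring,
            Polynomial.coeff_C_mul, Polynomial.coeff_mul_X_pow', if_pos (by omega)]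
          have : d c₀ - (d c₀ - d j) = d j := by omega
          rw [this, hL]
          simp [Matrix.of_apply]
          ring
      rw [Finset.sum_congr rfl (fun j _ => heach j)]
      have := congrFun hlamv i
      rw [Matrix.mulVec, dotProduct] at this
      exact this
    by_cases hdc₀ : d c₀ = 0
    · exfalso
      have hzero : ∀ i, M' i c₀ = 0 := by
        intro i
        have h1 : (M' i c₀).natDegree ≤ 0 := hdc₀ ▸ hdegcol i
        have h2 : (M' i c₀).coeff 0 = 0 := by
          have := hcoeffcol i; rwa [hdc₀] at this
        rw [Polynomial.eq_C_of_natDegree_le_zero h1, h2, map_zero]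
      have hcolvec : M' *ᵥ Pi.single c₀ 1 = 0 := by
        funext i
        rw [Matrix.mulVec_single]
        simp [hzero i]
      rw [hM', ← Matrix.mulVec_mulVec] at hcolvec
      have h3 : (P * E) *ᵥ Pi.single c₀ 1 = 0 := by
        apply hfull
        rw [hcolvec]
        symm
        exact Matrix.mulVec_zero G
      have h4 : (Pi.single c₀ 1 : Fin k → Polynomial F) = 0 := by
        apply mulVec_inj_of_isUnit_det hPE
        rw [h3, Matrix.mulVec_zero]
      have := congrFun h4 c₀
      simp at this
    · have hd' : ∀ c, Finset.univ.sup (fun i => (M' i c).natDegree)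
          ≤ if c = c₀ then d c₀ - 1 else d c := by
        intro c
        by_cases hc : c = c₀
        · subst hc
          rw [if_pos rfl]
          apply Finset.sup_le
          intro i _
          exact natDegree_le_pred' (hdegcol i) (hcoeffcol i) (by omega)
        · rw [if_neg hc]
          apply Finset.sup_le
          intro i _
          rw [hcol i c hc]
          exact hdeg i c
      have hsum' : (∑ c, Finset.univ.sup (fun i => (M' i c).natDegree)) < N := by
        have h5 : (∑ c, Finset.univ.sup (fun i => (M' i c).natDegree))
            ≤ ∑ c, (if c = c₀ then d c₀ - 1 else d c) :=
          Finset.sum_le_sum (fun c _ => hd' c)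
        have h6 : (∑ c, (if c = c₀ then d c₀ - 1 else d c)) + 1 ≤ ∑ c, d c := by
          rw [← Finset.add_sum_erase _ _ (Finset.mem_univ c₀),
            ← Finset.add_sum_erase _ d (Finset.mem_univ c₀), if_pos rfl]
          have : ∑ c ∈ Finset.univ.erase c₀, (if c = c₀ then d c₀ - 1 else d c)
              = ∑ c ∈ Finset.univ.erase c₀, d c :=
            Finset.sum_congr rfl (fun c hc => by
              rw [if_neg (Finset.ne_of_mem_erase hc)])
          omega
        have hN' : (∑ c, d c) ≤ N := hN
        have hd0 : d c₀ ≤ ∑ c, d c :=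
          Finset.single_le_sum (f := d) (fun c _ => Nat.zero_le _) (Finset.mem_univ c₀)
        omega
      exact ih _ hsum' (P * E) hPE le_rfl

private lemma shift_down (G : Matrix (Fin n) (Fin k) (Polynomial F))
    (hfull : Function.Injective G.mulVec) (hbasic : IsBasic G) {j a : ℕ} (haj : a ≤ j) :
    ∀ N : ℕ, ∀ u : Fin k → Polynomial F, G.mulVec u ≠ 0 →
      (∀ i, ((G.mulVec u) i).natDegree ≤ a) →
      (∑ i, ((G.mulVec u) i).natDegree) ≤ N →
      ∃ u' : Fin k → Polynomial F,
        (fun i => ((G.mulVec u') i).coeff 0) ≠ (0 : Fin n → F) ∧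
        (∑ t ∈ Finset.range (j + 1), hammingWt (fun i => ((G.mulVec u') i).coeff t))
          ≤ ∑ t ∈ Finset.range (j + 1), hammingWt (fun i => ((G.mulVec u) i).coeff t) := by
  intro N
  induction N with
  | zero =>
    intro u hne hdeg hsum
    refine ⟨u, ?_, le_rfl⟩
    intro h0
    apply hne
    funext i
    have h1 : ((G.mulVec u) i).natDegree = 0 := Nat.eq_zero_of_le_zero
      (le_trans (Finset.single_le_sum (f := fun i => ((G.mulVec u) i).natDegree)
        (fun i _ => Nat.zero_le _) (Finset.mem_univ i)) hsum)
    have h2 : ((G.mulVec u) i).coeff 0 = 0 := congrFun h0 i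
    rw [Polynomial.eq_C_of_natDegree_le_zero (le_of_eq h1), h2, map_zero]
    rfl
  | succ N ih =>
    intro u hne hdeg hsum
    by_cases h0 : (fun i => ((G.mulVec u) i).coeff 0) ≠ (0 : Fin n → F)
    · exact ⟨u, h0, le_rfl⟩
    push_neg at h0
    have hx : ∀ c, (u c).coeff 0 = 0 := by
      by_contra hxc
      push_neg at hxc
      set x : Fin k → F := fun c => (u c).coeff 0 with hxdef
      have hxne : x ≠ 0 := by
        obtain ⟨c, hc⟩ := hxc
        intro h; exact hc (congrFun h c)
      have hGx : ∀ r : Fin k → Fin n, StrictMono r → X ∣ (G.submatrix r id).det := by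
        intro r hr
        rw [Polynomial.X_dvd_iff]
        set A : Matrix (Fin k) (Fin k) F := Matrix.of (fun i c => ((G (r i) c)).coeff 0) with hA
        have hAx : A *ᵥ x = 0 := by
          funext i
          have h3 : ((G.mulVec u) (r i)).coeff 0 = 0 := by
            have := congrFun h0 (r i); exact this
          have h4 : ((G.mulVec u) (r i)).coeff 0 = ∑ c, (G (r i) c).coeff 0 * (u c).coeff 0 := by
            rw [show (G.mulVec u) (r i) = ∑ c, G (r i) c * u c from rfl,
              Polynomial.finset_sum_coeff]
            exact Finset.sum_congr rfl (fun c _ => Polynomial.mul_coeff_zero _ _)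
          show ∑ c, A i c * x c = 0
          have h5 : ∑ c, A i c * x c = ∑ c, (G (r i) c).coeff 0 * (u c).coeff 0 :=
            Finset.sum_congr rfl (fun c _ => rfl)
          rw [h5, ← h4]
          exact h3
        have hdet0 : A.det = 0 :=
          Matrix.exists_mulVec_eq_zero_iff.mp ⟨x, hxne, hAx⟩
        have h5 : ((G.submatrix r id).det).coeff 0 = A.det := by
          rw [Polynomial.coeff_zero_eq_eval_zero,
            show ((G.submatrix r id).det).eval 0
              = (Polynomial.evalRingHom (0 : F)) ((G.submatrix r id).det) from rfl,
            RingHom.map_det]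
          congr 1
          ext i c
          simp [Matrix.submatrix_apply, hA, Polynomial.coeff_zero_eq_eval_zero]
        rw [h5]
        exact hdet0
      exact Polynomial.not_isUnit_X (hbasic X hGx)
    have hXdvd : ∀ c, X ∣ u c := fun c => Polynomial.X_dvd_iff.mpr (hx c)
    set w : Fin k → Polynomial F := fun c => (hXdvd c).choose with hwdef
    have hwspec : ∀ c, u c = X * w c := fun c => (hXdvd c).choose_spec
    have hGw : ∀ i, (G.mulVec u) i = X * (G.mulVec w) i := by
      intro i
      show ∑ c, G i c * u c = X * ∑ c, G i c * w c
      rw [Finset.mul_sum]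
      exact Finset.sum_congr rfl fun c _ => by rw [hwspec c]; ring
    have hwne : G.mulVec w ≠ 0 := by
      intro h
      apply hne; funext i
      rw [hGw i, congrFun h i]
      simp
    have hwdeg : ∀ i, ((G.mulVec w) i).natDegree ≤ a := by
      intro i
      rcases eq_or_ne ((G.mulVec w) i) 0 with h | h
      · simp [h]
      · have h6 := hdeg i
        rw [hGw i, Polynomial.natDegree_mul Polynomial.X_ne_zero h,
          Polynomial.natDegree_X] at h6
        omega
    have hwsum : (∑ i, ((G.mulVec w) i).natDegree) ≤ N := by
      obtain ⟨i₀, hi₀⟩ := Function.ne_iff.mp hwne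
      have hi₀' : (G.mulVec w) i₀ ≠ 0 := hi₀
      have hle : ∀ i, ((G.mulVec w) i).natDegree ≤ ((G.mulVec u) i).natDegree := by
        intro i
        rcases eq_or_ne ((G.mulVec w) i) 0 with h | h
        · simp [h]
        · rw [hGw i, Polynomial.natDegree_mul Polynomial.X_ne_zero h, Polynomial.natDegree_X]
          omega
      have hstrict : ((G.mulVec w) i₀).natDegree < ((G.mulVec u) i₀).natDegree := by
        rw [hGw i₀, Polynomial.natDegree_mul Polynomial.X_ne_zero hi₀', Polynomial.natDegree_X]
        omega
      have h7 := Finset.sum_lt_sum (fun i (_ : i ∈ Finset.univ) => hle i)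
        ⟨i₀, Finset.mem_univ i₀, hstrict⟩
      omega
    obtain ⟨u', h1, h2⟩ := ih w hwne hwdeg hwsum
    refine ⟨u', h1, h2.trans ?_⟩
    have hcoeq : ∀ t : ℕ, (fun i => ((G.mulVec w) i).coeff t)
        = (fun i => ((G.mulVec u) i).coeff (t + 1)) := by
      intro t; funext i; rw [hGw i, Polynomial.coeff_X_mul]
    calc ∑ t ∈ Finset.range (j + 1), hammingWt (fun i => ((G.mulVec w) i).coeff t)
        = ∑ t ∈ Finset.range (j + 1), hammingWt (fun i => ((G.mulVec u) i).coeff (t + 1)) :=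
          Finset.sum_congr rfl fun t _ => by rw [hcoeq t]
      _ = (∑ t ∈ Finset.range j, hammingWt (fun i => ((G.mulVec u) i).coeff (t + 1)))
          + hammingWt (fun i => ((G.mulVec u) i).coeff (j + 1)) := Finset.sum_range_succ _ _
      _ = ∑ t ∈ Finset.range j, hammingWt (fun i => ((G.mulVec u) i).coeff (t + 1)) := by
          have h8 : (fun i => ((G.mulVec u) i).coeff (j + 1)) = (0 : Fin n → F) :=
            funext fun i => Polynomial.coeff_eq_zero_of_natDegree_lt
              (lt_of_le_of_lt (hdeg i) (by omega))
          rw [h8, hammingWt_zero, add_zero]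
      _ ≤ (∑ t ∈ Finset.range j, hammingWt (fun i => ((G.mulVec u) i).coeff (t + 1)))
          + hammingWt (fun i => ((G.mulVec u) i).coeff 0) := Nat.le_add_right _ _
      _ = ∑ t ∈ Finset.range (j + 1), hammingWt (fun i => ((G.mulVec u) i).coeff t) :=
          (Finset.sum_range_succ' (fun t => hammingWt (fun i => ((G.mulVec u) i).coeff t)) j).symm

end Aux

private lemma arith_final {ka A B W z d0 jj : ℕ}
    (h1 : W + z ≤ A + ka) (h2 : z + (d0 + 1) = ka) (h3 : d0 + 1 ≤ B)
    (h4 : A + B ≤ jj) : W ≤ jj := by omega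

open scoped Classical in
/-- If the `j`-th column distance attains its maximal value `(n-k)(j+1)+1`,
then `j ≤ L = ⌊δ/k⌋ + ⌊δ/(n-k)⌋`, where `δ` is the complexity of the code. -/
theorem colDist_max_le_L {F : Type*} [Field F] [Fintype F] {n k : ℕ}
    (hk : 0 < k) (hkn : k < n)
    (G : Matrix (Fin n) (Fin k) (Polynomial F))
    (hfull : Function.Injective G.mulVec) (hbasic : IsBasic G) (δ : ℕ)
    (hδ : IsGreatest {d : ℕ | ∃ r : Fin k → Fin n, StrictMono r ∧
        (G.submatrix r id).det ≠ 0 ∧ ((G.submatrix r id).det).natDegree = d} δ)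
    (j : ℕ)
    (hj : colDist {v | ∃ u : Fin k → Polynomial F, v = G.mulVec u} j =
      (n - k) * (j + 1) + 1) :
    j ≤ δ / k + δ / (n - k) := by
  by_contra hcon
  push_neg at hcon
  set a := δ / k with ha
  set b := δ / (n - k) with hb
  have hnk : 0 < n - k := by omega
  have hka : δ + 1 ≤ k * (a + 1) := by
    have h1 := Nat.div_add_mod δ k
    have h2 := Nat.mod_lt δ hk
    have h3 : k * (a + 1) = k * (δ / k) + k := Nat.mul_succ k (δ / k)
    omega
  have hnb : δ + 1 ≤ (n - k) * (b + 1) := by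
    have h1 := Nat.div_add_mod δ (n - k)
    have h2 := Nat.mod_lt δ hnk
    have h3 : (n - k) * (b + 1) = (n - k) * (δ / (n - k)) + (n - k) :=
      Nat.mul_succ (n - k) (δ / (n - k))
    omega
  have hub : ∀ r : Fin k → Fin n, StrictMono r → (G.submatrix r id).det ≠ 0 →
      ((G.submatrix r id).det).natDegree ≤ δ := fun r hr hne => hδ.2 ⟨r, hr, hne, rfl⟩
  obtain ⟨P, hPu, hsumd⟩ := cr_aux G hfull δ hub
    (∑ c, Finset.univ.sup
      (fun i => ((G * (1 : Matrix (Fin k) (Fin k) (Polynomial F))) i c).natDegree))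
    (1 : Matrix (Fin k) (Fin k) (Polynomial F)) (by simp) le_rfl
  set M := G * P with hM
  set d : Fin k → ℕ := fun c => Finset.univ.sup (fun i => (M i c).natDegree) with hd
  have hdeg : ∀ i c, (M i c).natDegree ≤ d c := by
    intro i c
    rw [hd]
    exact Finset.le_sup (f := fun i => (M i c).natDegree) (Finset.mem_univ i)
  have hsumd' : (∑ c, d c) ≤ δ := hsumd
  set m : Fin k → ℕ := fun c => a + 1 - d c with hm
  set z := k * (a + 1) - (δ + 1) with hz
  have hzcard : z + (δ + 1) = k * (a + 1) := Nat.sub_add_cancel hka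
  have hzle : z ≤ Fintype.card (Fin (a + 1) × Fin n) := by
    rw [Fintype.card_prod, Fintype.card_fin, Fintype.card_fin]
    have h4 : k * (a + 1) ≤ n * (a + 1) := Nat.mul_le_mul_right _ hkn.le
    have h5 : (a + 1) * n = n * (a + 1) := Nat.mul_comm _ _
    omega
  obtain ⟨Z, _, hZcard⟩ := Finset.exists_subset_card_eq
    (s := (Finset.univ : Finset (Fin (a + 1) × Fin n))) (n := z) (by rw [Finset.card_univ]; exact hzle)
  -- the parameter-to-polynomial map
  set Φ : (Π c : Fin k, (Fin (m c) → F)) → (Fin k → Polynomial F) :=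
    fun v c => ∑ t : Fin (m c), Polynomial.C (v c t) * X ^ (t : ℕ) with hΦ
  have hΦadd : ∀ v w, Φ (v + w) = Φ v + Φ w := by
    intro v w
    funext c
    show (∑ t : Fin (m c), Polynomial.C ((v + w) c t) * X ^ (t : ℕ)) = _
    simp only [Pi.add_apply, map_add, add_mul, Finset.sum_add_distrib]
    rfl
  have hΦsmul : ∀ (s : F) v, Φ (s • v) = fun c => Polynomial.C s * Φ v c := by
    intro s v
    funext c
    show (∑ t : Fin (m c), Polynomial.C ((s • v) c t) * X ^ (t : ℕ)) = _
    simp only [Pi.smul_apply, smul_eq_mul, map_mul, hΦ, Finset.mul_sum, mul_assoc]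
  set Ψ : (Π c : Fin k, (Fin (m c) → F)) →ₗ[F] ({ p // p ∈ Z } → F) :=
    { toFun := fun v p => ((M.mulVec (Φ v)) (p : Fin (a + 1) × Fin n).2).coeff
        (((p : Fin (a + 1) × Fin n).1 : ℕ)),
      map_add' := by
        intro v w
        funext p
        simp only [hΦadd, Matrix.mulVec_add, Pi.add_apply, Polynomial.coeff_add]
      map_smul' := by
        intro s v
        funext p
        simp only [hΦsmul, RingHom.id_apply, Pi.smul_apply, smul_eq_mul]
        have h6 : (fun c => Polynomial.C s * Φ v c) = (Polynomial.C s) • (Φ v) := rfl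
        rw [h6, Matrix.mulVec_smul, Pi.smul_apply, smul_eq_mul, Polynomial.coeff_C_mul] } with hΨ
  have hker : (LinearMap.ker Ψ) ≠ ⊥ := by
    intro hkb2
    have h10 := LinearMap.finrank_range_add_finrank_ker Ψ
    rw [hkb2, finrank_bot, add_zero] at h10
    have h11 : Module.finrank F ↥(LinearMap.range Ψ)
        ≤ Module.finrank F ({ p // p ∈ Z } → F) :=
      Submodule.finrank_le _
    rw [Module.finrank_pi, Fintype.card_coe, hZcard] at h11
    have h12 : Module.finrank F (Π c : Fin k, (Fin (m c) → F)) = ∑ c, m c := by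
      rw [Module.finrank_pi_fintype]
      exact Finset.sum_congr rfl (fun c _ => Module.finrank_fin_fun F)
    have h13 : ∀ c, a + 1 ≤ m c + d c := by
      intro c
      have : m c = a + 1 - d c := rfl
      omega
    have h14 : k * (a + 1) ≤ (∑ c, m c) + ∑ c, d c := by
      calc k * (a + 1) = ∑ _c : Fin k, (a + 1) := by
            rw [Finset.sum_const, Finset.card_univ, Fintype.card_fin, smul_eq_mul]
        _ ≤ ∑ c, (m c + d c) := Finset.sum_le_sum (fun c _ => h13 c)
        _ = (∑ c, m c) + ∑ c, d c := Finset.sum_add_distrib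
    rw [h12] at h10
    omega
  obtain ⟨v, hvmem, hvne⟩ := (Submodule.ne_bot_iff _).mp hker
  set u := Φ v with hu
  have hcoeffu : ∀ c (t : Fin (m c)), (u c).coeff (t : ℕ) = v c t := by
    intro c t
    rw [hu]
    show (∑ t' : Fin (m c), Polynomial.C (v c t') * X ^ (t' : ℕ)).coeff (t : ℕ) = v c t
    rw [Polynomial.finset_sum_coeff]
    rw [Finset.sum_eq_single t]
    · rw [Polynomial.coeff_C_mul, Polynomial.coeff_X_pow]
      simp
    · intro t' _ ht'
      have hne' : ¬((t' : ℕ) = (t : ℕ)) := fun h => ht' (Fin.ext h)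
      rw [Polynomial.coeff_C_mul, Polynomial.coeff_X_pow]
      simp only [mul_ite, mul_one, mul_zero, ite_eq_right_iff]
      exact fun h => absurd h.symm hne'
    · intro h
      exact absurd (Finset.mem_univ t) h
  have hune : u ≠ 0 := by
    intro h
    apply hvne
    funext c t
    have h15 := hcoeffu c t
    rw [h] at h15
    simpa using h15.symm
  have hMinj : Function.Injective M.mulVec := by
    intro x y hxy2
    apply mulVec_inj_of_isUnit_det hPu
    apply hfull
    rw [Matrix.mulVec_mulVec, Matrix.mulVec_mulVec, ← hM]
    exact hxy2
  set w := M.mulVec u with hw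
  have hwne : w ≠ 0 := fun h => hune (hMinj (h.trans (Matrix.mulVec_zero M).symm))
  have hwdeg : ∀ i, (w i).natDegree ≤ a := by
    intro i
    show ((∑ c, M i c * u c : Polynomial F)).natDegree ≤ a
    apply Polynomial.natDegree_sum_le_of_forall_le
    intro c _
    rcases Nat.eq_zero_or_pos (m c) with h0 | h1
    · have hu0 : u c = 0 := by
        rw [hu]
        show (∑ t : Fin (m c), Polynomial.C (v c t) * X ^ (t : ℕ)) = 0
        haveI : IsEmpty (Fin (m c)) := by rw [h0]; infer_instance
        rw [Finset.univ_eq_empty, Finset.sum_empty]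
      simp [hu0]
    · have hmc : m c = a + 1 - d c := rfl
      have hdc : d c ≤ a := by omega
      have hudegc : (u c).natDegree ≤ m c - 1 := by
        rw [hu]
        show (∑ t : Fin (m c), Polynomial.C (v c t) * X ^ (t : ℕ)).natDegree ≤ m c - 1
        apply Polynomial.natDegree_sum_le_of_forall_le
        intro t _
        have h16 : ((Polynomial.C (v c t)) * X ^ (t : ℕ)).natDegree ≤ (t : ℕ) := by
          calc ((Polynomial.C (v c t)) * X ^ (t : ℕ)).natDegree
              ≤ (Polynomial.C (v c t)).natDegree + (X ^ (t : ℕ) : Polynomial F).natDegree :=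
                Polynomial.natDegree_mul_le
            _ ≤ (t : ℕ) := by rw [Polynomial.natDegree_C, Polynomial.natDegree_X_pow]; omega
        exact h16.trans (by have := t.isLt; omega)
      calc (M i c * u c).natDegree ≤ d c + (m c - 1) :=
            Polynomial.natDegree_mul_le.trans (add_le_add (hdeg i c) hudegc)
        _ ≤ a := by omega
  have hforced : ∀ p : Fin (a + 1) × Fin n, p ∈ Z → (w p.2).coeff (p.1 : ℕ) = 0 := by
    intro p hp
    have h17 := congrFun (LinearMap.mem_ker.mp hvmem) (⟨p, hp⟩ : { x // x ∈ Z })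
    exact h17
  set W := ∑ t ∈ Finset.range (j + 1), hammingWt (fun i => (w i).coeff t) with hW
  have hWcount : W + z ≤ (a + 1) * n := by
    have hstep1 : W = ∑ t ∈ Finset.range (a + 1), hammingWt (fun i => (w i).coeff t) := by
      rw [hW]
      have hsub1 : Finset.range (a + 1) ⊆ Finset.range (j + 1) :=
        Finset.range_subset_range.mpr (Nat.succ_le_succ
          (le_trans (Nat.le_add_right a b) hcon.le))
      refine (Finset.sum_subset hsub1 ?_).symm
      intro t _ htn
      have hta : a + 1 ≤ t := by
        by_contra hlt
        exact htn (Finset.mem_range.mpr (by omega))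
      have h18 : (fun i => (w i).coeff t) = (0 : Fin n → F) :=
        funext fun i => Polynomial.coeff_eq_zero_of_natDegree_lt
          (lt_of_le_of_lt (hwdeg i) (by omega))
      rw [h18, hammingWt_zero]
    have hstep2 : (∑ t ∈ Finset.range (a + 1), hammingWt (fun i => (w i).coeff t))
        = ∑ t : Fin (a + 1), hammingWt (fun i => (w i).coeff (t : ℕ)) :=
      (Finset.sum_range (fun t => hammingWt (fun i => (w i).coeff t)))
    set S : Finset (Fin (a + 1) × Fin n) :=
      Finset.univ.filter (fun p => (w p.2).coeff (p.1 : ℕ) ≠ 0) with hS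
    have hstep3 : (∑ t : Fin (a + 1), hammingWt (fun i => (w i).coeff (t : ℕ))) = S.card := by
      rw [hS, Finset.card_filter, ← Finset.univ_product_univ, Finset.sum_product]
      refine Finset.sum_congr rfl (fun t _ => ?_)
      rw [hammingWt_eq, Finset.card_filter]
    have hdisj : Disjoint S Z := by
      rw [Finset.disjoint_left]
      intro p hpS hpZ
      exact (Finset.mem_filter.mp hpS).2 (hforced p hpZ)
    have hcard : S.card + Z.card ≤ (a + 1) * n := by
      rw [← Finset.card_union_of_disjoint hdisj]
      calc (S ∪ Z).card ≤ (Finset.univ : Finset (Fin (a + 1) × Fin n)).card :=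
            Finset.card_le_card (Finset.subset_univ _)
        _ = (a + 1) * n := by
            rw [Finset.card_univ, Fintype.card_prod, Fintype.card_fin, Fintype.card_fin]
    omega
  -- shift down to get nonzero constant coefficient
  have hGw : G.mulVec (P.mulVec u) = w := by
    rw [Matrix.mulVec_mulVec, ← hM]
  obtain ⟨u', hu'0, hu'w⟩ := shift_down G hfull hbasic (a := a) (j := j)
    (le_trans (Nat.le_add_right a b) hcon.le)
    (∑ i, ((G.mulVec (P.mulVec u)) i).natDegree) (P.mulVec u)
    (by rw [hGw]; exact hwne) (by rw [hGw]; exact hwdeg) le_rfl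
  rw [hGw] at hu'w
  have hmem2 : (∑ t ∈ Finset.range (j + 1), hammingWt (fun i => ((G.mulVec u') i).coeff t))
      ∈ {x | ∃ v ∈ {v : Fin n → Polynomial F | ∃ u : Fin k → Polynomial F, v = G.mulVec u},
        (fun i => (v i).coeff 0) ≠ (0 : Fin n → F) ∧
        (∑ t ∈ Finset.range (j + 1), hammingWt (fun i => (v i).coeff t)) = x} :=
    ⟨G.mulVec u', ⟨u', rfl⟩, hu'0, rfl⟩
  have hle := Nat.sInf_le hmem2
  rw [colDist] at hj
  rw [hj] at hle
  -- final arithmetic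
  have e0 : n - k + k = n := Nat.sub_add_cancel hkn.le
  have e2 : (n - k) * (a + b + 2) ≤ (n - k) * (j + 1) :=
    Nat.mul_le_mul_left _ (Nat.succ_le_succ (Nat.succ_le_of_lt hcon))
  have e3 : (n - k) * (a + b + 2) = (n - k) * (a + 1) + (n - k) * (b + 1) := by ring
  have f0 : (a + 1) * n = (n - k) * (a + 1) + k * (a + 1) := by
    calc (a + 1) * n = (n - k + k) * (a + 1) := by rw [e0, Nat.mul_comm]
      _ = (n - k) * (a + 1) + k * (a + 1) := Nat.add_mul _ _ _
  have f1 : W + z ≤ (n - k) * (a + 1) + k * (a + 1) := f0 ▸ hWcount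
  have f4 : (n - k) * (a + 1) + (n - k) * (b + 1) ≤ (n - k) * (j + 1) := e3 ▸ e2
  have f5 : W ≤ (n - k) * (j + 1) := arith_final f1 hzcard hnb f4
  exact Nat.not_succ_le_self _ (hle.trans (hu'w.trans f5))
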